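/- Let X₀ be a solid equilateral triangle in ℂ with side length 1 and center at the origin. Subdivide X₀ into 4ⁿ congruent equilateral sub-triangles of side length 1/2ⁿ. Let g : X₀ → ℂ be a map that is affine on each sub-triangle S and satisfies: for each sub-triangle S with barycenter y there is a point c_S ∈ ℂ such that g(S) is contained in the closed disk of radius 1/2^{n+1} centered at c_S. Then the area of g(X₀) is at most 3/4 times the area of X₀. -/

import Mathlib

open MeasureTheory Complex Set Pointwise

section Aux

lemma imform_eq' (s a1 a2 b1 b2 c1 c2 : ℝ) (hs : s^2 = 3) :
    s/2 * (a1^2+a2^2+b1^2+b2^2+c1^2+c2^2)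
      - (a1*b2 - a2*b1 + (b1*c2 - b2*c1) + (c1*a2 - c2*a1))
    = s/6*((a1+b1+c1)^2+(a2+b2+c2)^2)
      + s/12*((2*a1 - b1 - s*b2 - c1 + s*c2)^2 + (2*a2 + s*b1 - b2 - s*c1 - c2)^2) := by
  linear_combination (-(s*((c2-b2)^2+(b1-c1)^2))/12
    + (a1*b2 - a2*b1 + b1*c2 - b2*c1 + c1*a2 - c2*a1)/3) * hs

lemma imform_le' (s a1 a2 b1 b2 c1 c2 : ℝ) (hs : s^2 = 3) (hs0 : 0 ≤ s) :
    a1*b2 - a2*b1 + (b1*c2 - b2*c1) + (c1*a2 - c2*a1)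
      ≤ s/2 * (a1^2+a2^2+b1^2+b2^2+c1^2+c2^2) := by
  have h := imform_eq' s a1 a2 b1 b2 c1 c2 hs
  nlinarith [mul_nonneg hs0 (sq_nonneg (a1+b1+c1)), mul_nonneg hs0 (sq_nonneg (a2+b2+c2)),
    mul_nonneg hs0 (sq_nonneg (2*a1 - b1 - s*b2 - c1 + s*c2)),
    mul_nonneg hs0 (sq_nonneg (2*a2 + s*b1 - b2 - s*c1 - c2))]

lemma det_le' (s rad a1 a2 b1 b2 c1 c2 : ℝ) (hs : s^2 = 3) (hs0 : 0 ≤ s)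
    (ha : a1^2+a2^2 ≤ rad^2) (hb : b1^2+b2^2 ≤ rad^2) (hc : c1^2+c2^2 ≤ rad^2) :
    |(b1-a1)*(c2-a2) - (b2-a2)*(c1-a1)| ≤ s/2*(3*rad^2) := by
  rw [abs_le]
  constructor
  · have h := imform_le' s a1 a2 c1 c2 b1 b2 hs hs0
    nlinarith [mul_le_mul_of_nonneg_left ha hs0, mul_le_mul_of_nonneg_left hb hs0,
      mul_le_mul_of_nonneg_left hc hs0]
  · have h := imform_le' s a1 a2 b1 b2 c1 c2 hs hs0
    nlinarith [mul_le_mul_of_nonneg_left ha hs0, mul_le_mul_of_nonneg_left hb hs0,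
      mul_le_mul_of_nonneg_left hc hs0]

lemma Zeq' : convexHull ℝ ({0, 1, Complex.I} : Set ℂ)
    = {z : ℂ | 0 ≤ z.re ∧ 0 ≤ z.im ∧ z.re + z.im ≤ 1} := by
  apply Subset.antisymm
  · apply convexHull_min
    · rintro z (rfl | rfl | rfl) <;> norm_num
    · rintro x ⟨hx1, hx2, hx3⟩ y ⟨hy1, hy2, hy3⟩ a b ha hb hab
      simp only [mem_setOf_eq, add_re, add_im, real_smul, mul_re, mul_im,
        ofReal_re, ofReal_im]
      refine ⟨by nlinarith, by nlinarith, by nlinarith⟩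
  · rintro z ⟨h1, h2, h3⟩
    have := (convex_convexHull ℝ ({0, 1, Complex.I} : Set ℂ)).sum_mem
      (t := Finset.univ) (w := ![1 - z.re - z.im, z.re, z.im]) (z := ![0, 1, Complex.I])
      (by intro i _; fin_cases i <;> simp <;> linarith)
      (by simp [Fin.sum_univ_three]; ring)
      (by intro i _; fin_cases i <;>
        simp [subset_convexHull ℝ ({0,1,Complex.I} : Set ℂ)] <;>
        apply subset_convexHull ℝ ({0,1,Complex.I} : Set ℂ) <;> simp)
    convert this using 1
    simp [Fin.sum_univ_three, Complex.ext_iff, real_smul]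

lemma volD' : volume {p : ℝ × ℝ | 0 ≤ p.1 ∧ 0 ≤ p.2 ∧ p.1 + p.2 ≤ 1} = ENNReal.ofReal (1/2) := by
  set D := {p : ℝ × ℝ | 0 ≤ p.1 ∧ 0 ≤ p.2 ∧ p.1 + p.2 ≤ 1} with hD
  set rb := regionBetween (fun _ : ℝ => (0:ℝ)) (fun x => 1 - x) (Ioo 0 1) with hrb
  have hrbvol : (volume : Measure (ℝ × ℝ)) rb = ENNReal.ofReal (1/2) := by
    rw [Measure.volume_eq_prod, hrb, volume_regionBetween_eq_integral]
    · congr 1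
      simp only [Pi.sub_apply]
      rw [← integral_Ioc_eq_integral_Ioo, ← intervalIntegral.integral_of_le zero_le_one]
      have : (∫ x in (0:ℝ)..1, ((1:ℝ) - x - 0)) = ∫ x in (0:ℝ)..1, ((1:ℝ) - x) := by
        congr 1; funext x; ring
      rw [this,
        intervalIntegral.integral_sub intervalIntegrable_const
          intervalIntegral.intervalIntegrable_id]
      simp [integral_id]
      norm_num
    · exact integrableOn_const (by simp)
    · exact ((continuous_const.sub continuous_id).integrableOn_Icc (a := 0) (b := 1)).mono_set
        Ioo_subset_Icc_self
    · exact measurableSet_Ioo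
    · intro x hx; simp only [mem_Ioo] at hx; show (0:ℝ) ≤ 1 - x; linarith [hx.2]
  have hsub1 : rb ⊆ D := by
    rintro ⟨x, y⟩ ⟨hx, hy⟩
    simp only [mem_Ioo, mem_setOf_eq] at *
    exact ⟨hx.1.le, hy.1.le, by linarith [hy.2]⟩
  have hsub2 : D ⊆ rb ∪ ({p : ℝ × ℝ | p.1 = 0} ∪ {p | p.2 = 0} ∪ {p | p.1 + p.2 = 1}) := by
    rintro ⟨x, y⟩ ⟨h1, h2, h3⟩
    rcases eq_or_lt_of_le h1 with h1' | h1'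
    · right; left; left; exact h1'.symm
    rcases eq_or_lt_of_le h2 with h2' | h2'
    · right; left; right; exact h2'.symm
    rcases eq_or_lt_of_le h3 with h3' | h3'
    · right; right; exact h3'
    · left; exact ⟨⟨h1', by linarith⟩, h2', by simpa using by linarith⟩
  have hn1 : volume {p : ℝ × ℝ | p.1 = 0} = 0 := by
    have : {p : ℝ × ℝ | p.1 = 0} = ({0} : Set ℝ) ×ˢ (univ : Set ℝ) := by
      ext ⟨x, y⟩; simp [eq_comm]
    rw [this, Measure.volume_eq_prod, Measure.prod_prod]
    simp
  have hn2 : volume {p : ℝ × ℝ | p.2 = 0} = 0 := by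
    have : {p : ℝ × ℝ | p.2 = 0} = (univ : Set ℝ) ×ˢ ({0} : Set ℝ) := by
      ext ⟨x, y⟩; simp [eq_comm]
    rw [this, Measure.volume_eq_prod, Measure.prod_prod]
    simp
  have hn3 : volume {p : ℝ × ℝ | p.1 + p.2 = 1} = 0 := by
    rw [Measure.volume_eq_prod]
    rw [Measure.measure_prod_null]
    · refine Filter.Eventually.of_forall fun x => ?_
      have : (Prod.mk x ⁻¹' {p : ℝ × ℝ | p.1 + p.2 = 1}) = {1 - x} := by
        ext y; simp [eq_comm]; constructor <;> intro h <;> linarith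
      show volume (Prod.mk x ⁻¹' {p : ℝ × ℝ | p.1 + p.2 = 1}) = (0 : ℝ → ENNReal) x
      rw [this]; simp
    · exact isClosed_eq (continuous_fst.add continuous_snd) continuous_const |>.measurableSet
  refine le_antisymm ?_ ?_
  · calc volume D
        ≤ volume (rb ∪ ({p : ℝ × ℝ | p.1 = 0} ∪ {p | p.2 = 0} ∪ {p | p.1 + p.2 = 1})) :=
        measure_mono hsub2
      _ ≤ volume rb + volume ({p : ℝ × ℝ | p.1 = 0} ∪ {p | p.2 = 0} ∪ {p | p.1 + p.2 = 1}) :=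
        measure_union_le _ _
      _ ≤ volume rb + 0 := by
        gcongr
        refine le_trans (measure_union_le _ _) ?_
        rw [hn3]
        refine le_trans (add_le_add (measure_union_le _ _) le_rfl) ?_
        simp [hn1, hn2]
      _ = ENNReal.ofReal (1/2) := by rw [add_zero, hrbvol]
  · rw [← hrbvol]; exact measure_mono hsub1

lemma volT0' : volume (convexHull ℝ ({0, 1, Complex.I} : Set ℂ)) = ENNReal.ofReal (1/2) := by
  rw [Zeq']
  have hpre : {z : ℂ | 0 ≤ z.re ∧ 0 ≤ z.im ∧ z.re + z.im ≤ 1}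
      = Complex.measurableEquivRealProd ⁻¹' {p : ℝ × ℝ | 0 ≤ p.1 ∧ 0 ≤ p.2 ∧ p.1 + p.2 ≤ 1} := by
    rfl
  rw [hpre, Complex.volume_preserving_equiv_real_prod.measure_preimage, volD']
  · exact (MeasurableSet.nullMeasurableSet (by
      apply MeasurableSet.inter
      · exact measurableSet_le measurable_const measurable_fst
      apply MeasurableSet.inter
      · exact measurableSet_le measurable_const measurable_snd
      · exact measurableSet_le (measurable_fst.add measurable_snd) measurable_const))

noncomputable def tmap (A B C : ℂ) : ℂ →ₗ[ℝ] ℂ :=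
  Complex.reLm.smulRight (B - A) + Complex.imLm.smulRight (C - A)

lemma tmap_apply (A B C z : ℂ) : tmap A B C z = z.re • (B - A) + z.im • (C - A) := rfl

lemma tmap_det (A B C : ℂ) : LinearMap.det (tmap A B C)
    = (B - A).re * (C - A).im - (B - A).im * (C - A).re := by
  rw [← LinearMap.det_toMatrix Complex.basisOneI, Matrix.det_fin_two]
  have h0 : LinearMap.toMatrix basisOneI basisOneI (tmap A B C) =
      Matrix.of ![![(B - A).re, (C - A).re], ![(B - A).im, (C - A).im]] := by
    ext i j
    rw [LinearMap.toMatrix_apply]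
    fin_cases i <;> fin_cases j <;>
      simp [tmap_apply, Complex.coe_basisOneI, Complex.coe_basisOneI_repr]
  rw [h0]
  simp [Matrix.of_apply]
  ring

noncomputable def taff (A B C : ℂ) : ℂ →ᵃ[ℝ] ℂ :=
  ⟨fun z => tmap A B C z + A, tmap A B C, fun p v => by simp [tmap_apply]; ring⟩

lemma taff_apply (A B C z : ℂ) : taff A B C z = tmap A B C z + A := rfl

lemma tri_image (A B C : ℂ) :
    convexHull ℝ ({A, B, C} : Set ℂ)
      = taff A B C '' convexHull ℝ ({0, 1, Complex.I} : Set ℂ) := by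
  rw [AffineMap.image_convexHull]
  congr 1
  simp only [image_insert_eq, image_singleton, taff_apply, tmap_apply]
  norm_num

lemma taff_image_vol (A B C : ℂ) (s : Set ℂ) :
    volume (taff A B C '' s) = ENNReal.ofReal |LinearMap.det (tmap A B C)| * volume s := by
  have h1 : taff A B C '' s = (fun w => A + w) '' (tmap A B C '' s) := by
    rw [Set.image_image]
    exact Set.image_congr fun z _ => by rw [taff_apply]; ring
  rw [h1]
  have h2 : (fun w => A + w) '' (tmap A B C '' s) = A +ᵥ (tmap A B C '' s) := rfl
  rw [h2, measure_vadd, Measure.addHaar_image_linearMap]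

lemma vol_tri (A B C : ℂ) :
    volume (convexHull ℝ ({A, B, C} : Set ℂ))
      = ENNReal.ofReal (|(B - A).re * (C - A).im - (B - A).im * (C - A).re| / 2) := by
  rw [tri_image, taff_image_vol, tmap_det, volT0', ← ENNReal.ofReal_mul (abs_nonneg _)]
  ring_nf

lemma normsq_le' (z c : ℂ) (rad : ℝ) (h : z ∈ Metric.closedBall c rad) :
    (z - c).re^2 + (z - c).im^2 ≤ rad^2 := by
  rw [Metric.mem_closedBall, Complex.dist_eq] at h
  have h0 : (0:ℝ) ≤ ‖z - c‖ := norm_nonneg _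
  have := pow_le_pow_left₀ h0 h 2
  rw [Complex.sq_norm, Complex.normSq_apply] at this
  nlinarith

lemma dist_sq' (p q : ℂ) (d : ℝ) (h : dist p q = d) :
    (q - p).re^2 + (q - p).im^2 = d^2 := by
  have h1 : ‖q - p‖ = d := by rw [← h, dist_comm, Complex.dist_eq]
  have := congrArg (· ^ 2) h1
  rw [Complex.sq_norm, Complex.normSq_apply] at this
  nlinarith [this]

lemma equilateral_det (P Q R : ℂ) (d : ℝ) (hPQ : dist P Q = d) (hQR : dist Q R = d)
    (hPR : dist P R = d) :
    |(Q - P).re * (R - P).im - (Q - P).im * (R - P).re| = Real.sqrt 3 / 2 * d^2 := by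
  have e1 := dist_sq' P Q d hPQ
  have e3 := dist_sq' P R d hPR
  have e2 := dist_sq' Q R d hQR
  have hRQ : R - Q = (R - P) - (Q - P) := by ring
  rw [hRQ] at e2
  simp only [Complex.sub_re, Complex.sub_im] at e1 e2 e3 ⊢
  have hdot : (Q.re-P.re)*(R.re-P.re) + (Q.im-P.im)*(R.im-P.im) = d^2/2 := by
    linear_combination (e1 + e3 - e2)/2
  have hdet2 : ((Q.re-P.re)*(R.im-P.im) - (Q.im-P.im)*(R.re-P.re))^2 = 3/4 * d^4 := by
    linear_combination ((R.re-P.re)^2+(R.im-P.im)^2)*e1 + d^2*e3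
      - ((Q.re-P.re)*(R.re-P.re)+(Q.im-P.im)*(R.im-P.im) + d^2/2)*hdot
  have h30 : (0:ℝ) ≤ 3 := by norm_num
  rw [show |(Q.re-P.re)*(R.im-P.im) - (Q.im-P.im)*(R.re-P.re)|
      = Real.sqrt (((Q.re-P.re)*(R.im-P.im) - (Q.im-P.im)*(R.re-P.re))^2)
      from (Real.sqrt_sq_eq_abs _).symm, hdet2,
    show (3:ℝ)/4 * d^4 = (Real.sqrt 3 / 2 * d^2)^2 by
      rw [mul_pow, div_pow, Real.sq_sqrt h30]; ring]
  exact Real.sqrt_sq (by positivity)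

end Aux

theorem affine_image_area_bound
    (P Q R : ℂ) (hPQ : dist P Q = 1) (hQR : dist Q R = 1) (hPR : dist P R = 1)
    (hcenter : P + Q + R = 0)
    (X₀ : Set ℂ) (hX₀ : X₀ = convexHull ℝ {P, Q, R})
    (n : ℕ) (S : Fin (4 ^ n) → Set ℂ)
    (hS : ∀ i, ∃ p q r : ℂ,
      dist p q = 1 / 2 ^ n ∧ dist q r = 1 / 2 ^ n ∧ dist p r = 1 / 2 ^ n ∧
      S i = convexHull ℝ {p, q, r})
    (hcover : X₀ = ⋃ i, S i)
    (g : ℂ → ℂ)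
    (haff : ∀ i, ∃ f : ℂ →ᵃ[ℝ] ℂ, Set.EqOn g f (S i))
    (hdisk : ∀ i, ∃ c : ℂ, g '' S i ⊆ Metric.closedBall c (1 / 2 ^ (n + 1))) :
    volume (g '' X₀) ≤ ENNReal.ofReal (3 / 4) * volume X₀ := by
  have hs3 : (Real.sqrt 3)^2 = 3 := Real.sq_sqrt (by norm_num)
  have hs0 : (0:ℝ) ≤ Real.sqrt 3 := Real.sqrt_nonneg 3
  -- volume of X₀
  have hvolX : volume X₀ = ENNReal.ofReal (Real.sqrt 3 / 4) := by
    rw [hX₀, vol_tri, equilateral_det P Q R 1 hPQ hQR hPR]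
    congr 1
    ring
  -- per-piece bound
  set rad : ℝ := 1 / 2 ^ (n + 1) with hradDef
  have hkey : ∀ i, volume (g '' S i)
      ≤ ENNReal.ofReal (3 * Real.sqrt 3 / 4 * rad^2) := by
    intro i
    obtain ⟨p, q, r, hpq, hqr, hpr, hSi⟩ := hS i
    obtain ⟨f, hf⟩ := haff i
    obtain ⟨c, hc⟩ := hdisk i
    have himg : g '' S i = convexHull ℝ ({f p, f q, f r} : Set ℂ) := by
      rw [hf.image_eq, hSi, AffineMap.image_convexHull]
      simp only [image_insert_eq, image_singleton]
    have hmem : ∀ x ∈ ({p, q, r} : Set ℂ), f x ∈ Metric.closedBall c rad := by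
      intro x hx
      have hxS : x ∈ S i := by rw [hSi]; exact subset_convexHull ℝ _ hx
      have : f x = g x := (hf hxS).symm
      rw [this]
      exact hc ⟨x, hxS, rfl⟩
    have hp' := normsq_le' (f p) c rad (hmem p (by simp))
    have hq' := normsq_le' (f q) c rad (hmem q (by simp))
    have hr' := normsq_le' (f r) c rad (hmem r (by simp))
    rw [himg, vol_tri]
    apply ENNReal.ofReal_le_ofReal
    have hdet : |(f q - f p).re * (f r - f p).im - (f q - f p).im * (f r - f p).re|
        ≤ Real.sqrt 3 / 2 * (3 * rad^2) := by
      have e1 : (f q - f p).re = (f q - c).re - (f p - c).re := by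
        simp [Complex.sub_re]
      have e2 : (f q - f p).im = (f q - c).im - (f p - c).im := by
        simp [Complex.sub_im]
      have e3 : (f r - f p).re = (f r - c).re - (f p - c).re := by
        simp [Complex.sub_re]
      have e4 : (f r - f p).im = (f r - c).im - (f p - c).im := by
        simp [Complex.sub_im]
      rw [e1, e2, e3, e4]
      exact det_le' (Real.sqrt 3) rad _ _ _ _ _ _ hs3 hs0 hp' hq' hr'
    calc |(f q - f p).re * (f r - f p).im - (f q - f p).im * (f r - f p).re| / 2
        ≤ (Real.sqrt 3 / 2 * (3 * rad^2)) / 2 := by linarith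
      _ = 3 * Real.sqrt 3 / 4 * rad^2 := by ring
  -- sum up
  have hunion : g '' X₀ = ⋃ i, g '' S i := by rw [hcover, image_iUnion]
  calc volume (g '' X₀) ≤ ∑' i, volume (g '' S i) := by
        rw [hunion]; exact measure_iUnion_le _
    _ ≤ ∑' _i : Fin (4^n), ENNReal.ofReal (3 * Real.sqrt 3 / 4 * rad^2) :=
        ENNReal.tsum_le_tsum hkey
    _ = (4^n : ℕ) * ENNReal.ofReal (3 * Real.sqrt 3 / 4 * rad^2) := by
        rw [tsum_fintype, Finset.sum_const, Finset.card_univ, Fintype.card_fin, nsmul_eq_mul]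
    _ = ENNReal.ofReal ((4^n : ℕ) * (3 * Real.sqrt 3 / 4 * rad^2)) := by
        rw [show ((4^n : ℕ) : ENNReal) = ENNReal.ofReal ((4^n : ℕ) : ℝ) from
          (ENNReal.ofReal_natCast _).symm, ← ENNReal.ofReal_mul (by positivity)]
    _ = ENNReal.ofReal (3 / 4) * volume X₀ := by
        rw [hvolX, ← ENNReal.ofReal_mul (by norm_num)]
        congr 1
        have h2 : ((2:ℝ) ^ (n + 1))^2 = 4 ^ (n + 1) := by
          rw [← pow_mul, mul_comm (n+1) 2, pow_mul]; norm_num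
        have h4 : ((4:ℝ)) ^ (n+1) = 4 * 4^n := by rw [pow_succ]; ring
        rw [hradDef]
        push_cast
        rw [div_pow, one_pow, h2, h4]
        have h4n : (4:ℝ)^n ≠ 0 := by positivity
        field_simp
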